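/- Let T be a spanning tree of weighted graph G, let M be a minimum spanning tree of G, and let X = M \ T. If a tree edge e ∈ T participates in any violated swap constraint (i.e., some swap (e,f) has w(f) ≤ w(e)), then the swap (e,f₀) is violated, where f₀ is the minimum-weight edge of X forming a swap with e. -/

import Mathlib

open SimpleGraph
open scoped Classical

/-- `T` is a spanning tree of `G`. -/
def IsSpanningTree {V : Type*} (G T : SimpleGraph V) : Prop :=
  T ≤ G ∧ T.IsTree

/-- `(e, f)` is a swap for the spanning tree `T` of `G`. -/
def IsSwap {V : Type*} (G T : SimpleGraph V) (e f : Sym2 V) : Prop :=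
  e ∈ T.edgeSet ∧ f ∈ G.edgeSet ∧ f ∉ T.edgeSet ∧
    IsSpanningTree G (SimpleGraph.fromEdgeSet ((insert f T.edgeSet) \ {e}))

open scoped Classical in
/-- Total weight of (the edges of) a graph. -/
noncomputable def treeWeight {V : Type*} [Fintype V] (T : SimpleGraph V)
    (w : Sym2 V → ℝ) : ℝ :=
  ∑ e ∈ T.edgeFinset, w e

section Aux

variable {V : Type*}

private lemma sym2_rep (f : Sym2 V) : ∃ a b, f = s(a, b) := by
  induction f using Sym2.ind with | _ a b => exact ⟨a, b, rfl⟩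

private lemma fromEdgeSet_le_of_subset {s : Set (Sym2 V)} {G : SimpleGraph V}
    (h : s ⊆ G.edgeSet) : fromEdgeSet s ≤ G := by
  intro p q hpq
  rw [fromEdgeSet_adj] at hpq
  exact G.mem_edgeSet.mp (h hpq.1)

private lemma reach_endpoint_aux {K : SimpleGraph V} (u v : V) :
    ∀ {c d : V}, K.Walk c d →
      ((K.deleteEdges {s(u, v)}).Reachable d u ∨ (K.deleteEdges {s(u, v)}).Reachable d v) →
      ((K.deleteEdges {s(u, v)}).Reachable c u ∨ (K.deleteEdges {s(u, v)}).Reachable c v) := by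
  intro c d p
  induction p with
  | nil => exact id
  | @cons a b _ h p ih =>
    intro hd
    by_cases hab : s(a, b) = s(u, v)
    · rw [Sym2.eq_iff] at hab
      rcases hab with ⟨rfl, rfl⟩ | ⟨rfl, rfl⟩
      · exact Or.inl (Reachable.refl _)
      · exact Or.inr (Reachable.refl _)
    · have hadj : (K.deleteEdges {s(u, v)}).Adj a b := by
        rw [deleteEdges_adj]
        exact ⟨h, by simpa using hab⟩
      rcases ih hd with h1 | h1
      · exact Or.inl (hadj.reachable.trans h1)
      · exact Or.inr (hadj.reachable.trans h1)

private lemma reach_endpoint {K : SimpleGraph V} (hK : K.Preconnected) (u v : V) (c : V) :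
    (K.deleteEdges {s(u, v)}).Reachable c u ∨ (K.deleteEdges {s(u, v)}).Reachable c v := by
  obtain ⟨p⟩ := hK c u
  exact reach_endpoint_aux u v p (Or.inl (Reachable.refl _))

private lemma exists_cross {K : SimpleGraph V} (P : V → Prop) :
    ∀ {c d : V} (p : K.Walk c d), P c → ¬P d →
      ∃ x y, K.Adj x y ∧ s(x, y) ∈ p.edges ∧ P x ∧ ¬P y := by
  intro c d p
  induction p with
  | nil => intro hc hd; exact absurd hc hd
  | @cons a b _ h p ih =>
    intro hc hd
    by_cases hb : P b
    · obtain ⟨x, y, h1, h2, h3, h4⟩ := ih hb hd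
      exact ⟨x, y, h1, by simp [h2], h3, h4⟩
    · exact ⟨a, b, h, by simp, hc, hb⟩

private lemma swap_isTree {K : SimpleGraph V} (hK : K.IsTree) {u v a b : V}
    (huv : K.Adj u v) (hab : a ≠ b) (hfK : s(a, b) ∉ K.edgeSet)
    (hnr : ¬(K.deleteEdges {s(u, v)}).Reachable a b) :
    (fromEdgeSet (insert s(a, b) K.edgeSet \ {s(u, v)})).IsTree := by
  set K' := K.deleteEdges {s(u, v)} with hK'def
  set S := fromEdgeSet (insert s(a, b) K.edgeSet \ {s(u, v)}) with hSdef
  have hne : s(a, b) ≠ s(u, v) := fun h => hfK (by rw [h]; exact K.mem_edgeSet.mpr huv)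
  have hK'S : K' ≤ S := by
    intro x y hxy
    rw [hK'def, deleteEdges_adj] at hxy
    rw [hSdef, fromEdgeSet_adj]
    exact ⟨⟨Set.mem_insert_iff.mpr (Or.inr (K.mem_edgeSet.mpr hxy.1)), hxy.2⟩, hxy.1.ne⟩
  have hSab : S.Adj a b := by
    rw [hSdef, fromEdgeSet_adj]
    exact ⟨⟨Set.mem_insert _ _, by simpa using hne⟩, hab⟩
  have hsplit : ∀ c, K'.Reachable c u ∨ K'.Reachable c v :=
    reach_endpoint hK.isConnected.preconnected u v
  have horient : (K'.Reachable a u ∧ K'.Reachable b v) ∨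
      (K'.Reachable a v ∧ K'.Reachable b u) := by
    rcases hsplit a with h1 | h1 <;> rcases hsplit b with h2 | h2
    · exact absurd (h1.trans h2.symm) hnr
    · exact Or.inl ⟨h1, h2⟩
    · exact Or.inr ⟨h1, h2⟩
    · exact absurd (h1.trans h2.symm) hnr
  have hu_a : S.Reachable u a ∧ S.Reachable v a := by
    rcases horient with ⟨h1, h2⟩ | ⟨h1, h2⟩
    · exact ⟨(h1.mono hK'S).symm, ((h2.mono hK'S).symm).trans hSab.symm.reachable⟩
    · exact ⟨((h2.mono hK'S).symm).trans hSab.symm.reachable, (h1.mono hK'S).symm⟩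
  have hreach : ∀ c, S.Reachable c a := by
    intro c
    rcases hsplit c with h1 | h1
    · exact (h1.mono hK'S).trans hu_a.1
    · exact (h1.mono hK'S).trans hu_a.2
  have hconn : S.Connected := by
    rw [connected_iff]
    exact ⟨fun x y => (hreach x).trans (hreach y).symm, ⟨a⟩⟩
  refine ⟨hconn, ?_⟩
  intro z c hc
  by_cases hmem : s(a, b) ∈ c.edges
  · have h2 := (adj_and_reachable_delete_edges_iff_exists_cycle.mpr ⟨z, c, hc, hmem⟩).2
    refine hnr (h2.mono ?_)
    intro p q hpq
    rw [deleteEdges_adj] at hpq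
    obtain ⟨hpq1, hpq2⟩ := hpq
    rw [hSdef, fromEdgeSet_adj] at hpq1
    rw [hK'def, deleteEdges_adj]
    rcases Set.mem_insert_iff.mp hpq1.1.1 with h3 | h3
    · exact absurd (Set.mem_singleton_iff.mpr h3) hpq2
    · exact ⟨K.mem_edgeSet.mp h3, hpq1.1.2⟩
  · have hed : ∀ e ∈ c.edges, e ∈ K.edgeSet := by
      intro e hee
      have h3 := c.edges_subset_edgeSet hee
      rw [hSdef, edgeSet_fromEdgeSet] at h3
      rcases Set.mem_insert_iff.mp h3.1.1 with h4 | h4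
      · exact absurd (h4 ▸ hee) hmem
      · exact h4
    exact hK.IsAcyclic (c.transfer K hed) (hc.transfer hed)

private lemma treeWeight_swap [Fintype V] (K : SimpleGraph V) (w : Sym2 V → ℝ) {u v a b : V}
    (huv : K.Adj u v) (hab : a ≠ b) (hfK : s(a, b) ∉ K.edgeSet) :
    treeWeight (fromEdgeSet (insert s(a, b) K.edgeSet \ {s(u, v)})) w
      = treeWeight K w + w s(a, b) - w s(u, v) := by
  have hne : s(a, b) ≠ s(u, v) := fun h => hfK (by rw [h]; exact K.mem_edgeSet.mpr huv)
  have hnotmem : s(a, b) ∉ K.edgeFinset.erase s(u, v) := by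
    simp only [Finset.mem_erase, mem_edgeFinset]
    exact fun h => hfK h.2
  have hsum := Finset.add_sum_erase K.edgeFinset w (mem_edgeFinset.mpr (K.mem_edgeSet.mpr huv))
  rw [treeWeight, treeWeight]
  refine Eq.trans (Finset.sum_congr
    (s₂ := insert s(a, b) (K.edgeFinset.erase s(u, v))) ?_ fun _ _ => rfl) ?_
  · ext g
    simp only [mem_edgeFinset, edgeSet_fromEdgeSet, Set.mem_diff, Set.mem_insert_iff,
      Set.mem_singleton_iff, Finset.mem_insert, Finset.mem_erase, Set.mem_setOf_eq,
      mem_edgeFinset]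
    constructor
    · rintro ⟨⟨h1 | h1, h2⟩, _⟩
      · exact Or.inl h1
      · exact Or.inr ⟨h2, h1⟩
    · rintro (rfl | ⟨h2, h1⟩)
      · exact ⟨⟨Or.inl rfl, hne⟩, by simp [Sym2.mk_isDiag_iff, hab]⟩
      · exact ⟨⟨Or.inr h1, h2⟩, K.not_isDiag_of_mem_edgeSet h1⟩
  · rw [Finset.sum_insert hnotmem]
    linarith

end Aux

/-- Let `T` be a spanning tree of `G`, `M` a minimum spanning tree, and
`X = M \ T`.  If a tree edge `e ∈ T` participates in any violated swap
constraint (some swap `(e,f)` with `w f < w e`), then the swap `(e,f₀)` is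
violated, where `f₀` is the minimum-weight edge of `X` forming a swap with `e`. -/
theorem min_swap_edge_violated {V : Type*} [Fintype V] [DecidableEq V]
    (G T M : SimpleGraph V) (w : Sym2 V → ℝ)
    (hw : ∀ e ∈ G.edgeSet, ∀ f ∈ G.edgeSet, w e = w f → e = f)
    (hG : G.Connected) (hT : IsSpanningTree G T)
    (hM : IsSpanningTree G M ∧
      ∀ T' : SimpleGraph V, IsSpanningTree G T' → treeWeight M w ≤ treeWeight T' w)
    (e : Sym2 V) (he : e ∈ T.edgeSet)
    (hviol : ∃ f : Sym2 V, IsSwap G T e f ∧ w f < w e) :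
    ∃ f₀ ∈ M.edgeFinset \ T.edgeFinset, IsSwap G T e f₀ ∧
      (∀ f ∈ M.edgeFinset \ T.edgeFinset, IsSwap G T e f → w f₀ ≤ w f) ∧
      w f₀ < w e := by
  obtain ⟨x, y, rfl⟩ := sym2_rep e
  have hxy : T.Adj x y := T.mem_edgeSet.mp he
  set T' := T.deleteEdges {s(x, y)} with hT'def
  have hPy : ¬T'.Reachable x y := by
    intro h
    obtain ⟨u', c, hc, -⟩ := adj_and_reachable_delete_edges_iff_exists_cycle.mp ⟨hxy, h⟩
    exact hT.2.IsAcyclic c hc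
  -- crossing edges give swaps
  have swap_of_cross : ∀ c d : V, G.Adj c d → s(c, d) ≠ s(x, y) → T'.Reachable x c →
      ¬T'.Reachable x d → s(c, d) ∉ T.edgeSet ∧ IsSwap G T s(x, y) s(c, d) := by
    intro c d hGc hne hPc hPd
    have hcd : s(c, d) ∉ T.edgeSet := by
      intro hmem
      have hadj : T'.Adj c d := by
        rw [hT'def, deleteEdges_adj]
        exact ⟨T.mem_edgeSet.mp hmem, by simpa using hne⟩
      exact hPd (hPc.trans hadj.reachable)
    have hnr : ¬T'.Reachable c d := fun h => hPd (hPc.trans h)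
    have htree := swap_isTree hT.2 hxy hGc.ne hcd hnr
    have hle : fromEdgeSet (insert s(c, d) T.edgeSet \ {s(x, y)}) ≤ G := by
      refine fromEdgeSet_le_of_subset fun g hg => ?_
      rcases Set.mem_insert_iff.mp hg.1 with h3 | h3
      · rw [h3]; exact G.mem_edgeSet.mpr hGc
      · exact edgeSet_mono hT.1 h3
    exact ⟨hcd, he, G.mem_edgeSet.mpr hGc, hcd, hle, htree⟩
  -- swaps give crossing edges
  have cross_of_swap : ∀ f : Sym2 V, IsSwap G T s(x, y) f →
      ∃ a b, f = s(a, b) ∧ G.Adj a b ∧ T'.Reachable x a ∧ ¬T'.Reachable x b := by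
    intro f hsw
    obtain ⟨a, b, rfl⟩ := sym2_rep f
    obtain ⟨-, hfG, hfT, hle, htree⟩ := hsw
    have hadjG : G.Adj a b := G.mem_edgeSet.mp hfG
    have hne : s(a, b) ≠ s(x, y) := fun h => hfT (h ▸ he)
    have hnotsame : ¬T'.Reachable a b := by
      intro hr
      set S := fromEdgeSet (insert s(a, b) T.edgeSet \ {s(x, y)}) with hSdef
      have hSab : S.Adj a b := by
        rw [hSdef, fromEdgeSet_adj]
        exact ⟨⟨Set.mem_insert _ _, by simpa using hne⟩, hadjG.ne⟩
      obtain ⟨p0⟩ := hr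
      have hpe : ∀ g ∈ (p0.toPath : T'.Walk a b).edges, g ∈ S.edgeSet := by
        intro g hg
        have h1 := (p0.toPath : T'.Walk a b).edges_subset_edgeSet hg
        rw [hT'def, edgeSet_deleteEdges] at h1
        rw [hSdef, edgeSet_fromEdgeSet]
        exact ⟨⟨Set.mem_insert_iff.mpr (Or.inr h1.1), h1.2⟩,
          T.not_isDiag_of_mem_edgeSet h1.1⟩
      have hcyc : (SimpleGraph.Walk.cons hSab.symm
          ((p0.toPath : T'.Walk a b).transfer S hpe)).IsCycle := by
        rw [SimpleGraph.Walk.cons_isCycle_iff]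
        refine ⟨(p0.toPath).2.transfer hpe, ?_⟩
        rw [SimpleGraph.Walk.edges_transfer]
        intro hmem
        have h1 := (p0.toPath : T'.Walk a b).edges_subset_edgeSet hmem
        rw [hT'def, edgeSet_deleteEdges] at h1
        have hfT' : s(b, a) ∉ T.edgeSet := by rwa [Sym2.eq_swap] at hfT
        exact hfT' h1.1
      exact htree.IsAcyclic _ hcyc
    rcases reach_endpoint hT.2.isConnected.preconnected x y a with ha | ha <;>
      rcases reach_endpoint hT.2.isConnected.preconnected x y b with hb | hb
    · exact absurd (ha.trans hb.symm) hnotsame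
    · exact ⟨a, b, rfl, hadjG, ha.symm, fun h => hPy (h.trans hb)⟩
    · exact ⟨b, a, Sym2.eq_swap.symm, hadjG.symm, hb.symm, fun h => hPy (h.trans ha)⟩
    · exact absurd (ha.trans hb.symm) hnotsame
  obtain ⟨f, hsw, hwf⟩ := hviol
  obtain ⟨a, b, rfl, hadjG, hPa, hPb⟩ := cross_of_swap f hsw
  have hcand : ∃ g, g ∈ M.edgeSet ∧ g ∉ T.edgeSet ∧ IsSwap G T s(x, y) g ∧
      w g < w s(x, y) := by
    by_cases hfM : s(a, b) ∈ M.edgeSet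
    · exact ⟨s(a, b), hfM, hsw.2.2.1, hsw, hwf⟩
    · obtain ⟨p0⟩ := hM.1.2.isConnected a b
      obtain ⟨c, d, hMcd, hcd_mem, hPc, hPd⟩ :=
        exists_cross (fun z => T'.Reachable x z) (p0.toPath : M.Walk a b) hPa hPb
      set M' := M.deleteEdges {s(c, d)} with hM'def
      have hgM' : s(c, d) ∉ M'.edgeSet := by
        rw [hM'def, edgeSet_deleteEdges]
        simp
      have hnrM : ¬M'.Reachable a b := by
        intro hr
        obtain ⟨q0⟩ := hr
        have hqe : ∀ g ∈ (q0.toPath : M'.Walk a b).edges, g ∈ M.edgeSet := by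
          intro g hg
          have h1 := (q0.toPath : M'.Walk a b).edges_subset_edgeSet hg
          rw [hM'def, edgeSet_deleteEdges] at h1
          exact h1.1
        have hqp : ((q0.toPath : M'.Walk a b).transfer M hqe).IsPath :=
          (q0.toPath).2.transfer hqe
        have hEq := isAcyclic_iff_path_unique.mp hM.1.2.IsAcyclic
          (⟨_, hqp⟩ : M.Path a b) p0.toPath
        rw [← hEq] at hcd_mem
        have : s(c, d) ∈ ((q0.toPath : M'.Walk a b).transfer M hqe).edges := hcd_mem
        rw [SimpleGraph.Walk.edges_transfer] at this
        exact hgM' ((q0.toPath : M'.Walk a b).edges_subset_edgeSet this)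
      have htreeM := swap_isTree hM.1.2 hMcd hadjG.ne hfM hnrM
      have hleM : fromEdgeSet (insert s(a, b) M.edgeSet \ {s(c, d)}) ≤ G := by
        refine fromEdgeSet_le_of_subset fun g hg => ?_
        rcases Set.mem_insert_iff.mp hg.1 with h3 | h3
        · rw [h3]; exact G.mem_edgeSet.mpr hadjG
        · exact edgeSet_mono hM.1.1 h3
      have hmin' := hM.2 _ ⟨hleM, htreeM⟩
      have hwt := treeWeight_swap M w hMcd hadjG.ne hfM
      have hwcd : w s(c, d) ≤ w s(a, b) := by
        rw [hwt] at hmin'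
        linarith
      have hwlt : w s(c, d) < w s(x, y) := lt_of_le_of_lt hwcd hwf
      have hne_cd : s(c, d) ≠ s(x, y) := fun h => absurd (h ▸ hwlt) (lt_irrefl _)
      obtain ⟨hcdT, hcdsw⟩ := swap_of_cross c d (hM.1.1 hMcd) hne_cd hPc hPd
      exact ⟨s(c, d), M.mem_edgeSet.mpr hMcd, hcdT, hcdsw, hwlt⟩
  obtain ⟨g, hgM, hgT, hgsw, hgw⟩ := hcand
  classical
  set Sf := (M.edgeFinset \ T.edgeFinset).filter (fun f => IsSwap G T s(x, y) f) with hSf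
  have hgS : g ∈ Sf := by
    rw [hSf, Finset.mem_filter, Finset.mem_sdiff, mem_edgeFinset, mem_edgeFinset]
    exact ⟨⟨hgM, hgT⟩, hgsw⟩
  obtain ⟨f₀, hf₀, hmin⟩ := Finset.exists_min_image Sf w ⟨g, hgS⟩
  rw [hSf, Finset.mem_filter] at hf₀
  exact ⟨f₀, hf₀.1, hf₀.2,
    fun f hf hfsw => hmin f (by rw [hSf, Finset.mem_filter]; exact ⟨hf, hfsw⟩),
    lt_of_le_of_lt (hmin g hgS) hgw⟩
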